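/- Let G=(V,E) be an r-rank hypergraph with min-cut capacity λ ≥ r·(4r²)^r. Let (C, V∖C) be a min-cut with min{|C|, |V∖C|} ≥ 4r². Let X' ⊆ V with 0 < min{|X'∩C|, |X'∩(V∖C)|} ≤ 3r², and let X'' := Shave(X') = {v ∈ X' : d_{X'}(v) > (1−1/r²)d(v)}. Then min{|X''∩C|, |X''∩(V∖C)|} ≤ min{|X'∩C|, |X'∩(V∖C)|} − 1. -/

import Mathlib

open Finset

/-- Degree of a vertex: the number of hyperedges containing it. -/
def hypDeg {V : Type*} [Fintype V] [DecidableEq V]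
    (E : Finset (Finset V)) (v : V) : ℕ :=
  (E.filter (fun e => v ∈ e)).card

/-- `d_X(v)`: the number of hyperedges containing `v` and contained in `X`. -/
def hypDegIn {V : Type*} [Fintype V] [DecidableEq V]
    (E : Finset (Finset V)) (X : Finset V) (v : V) : ℕ :=
  (E.filter (fun e => v ∈ e ∧ e ⊆ X)).card

/-- Capacity of the cut `(C, V∖C)`. -/
def cutCap {V : Type*} [Fintype V] [DecidableEq V]
    (E : Finset (Finset V)) (C : Finset V) : ℕ :=
  (E.filter (fun e => (e ∩ C).Nonempty ∧ (e ∩ Cᶜ).Nonempty)).card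

/-- `(C, V∖C)` is a min-cut. -/
def IsMinCut {V : Type*} [Fintype V] [DecidableEq V]
    (E : Finset (Finset V)) (C : Finset V) : Prop :=
  C.Nonempty ∧ Cᶜ.Nonempty ∧
    ∀ D : Finset V, D.Nonempty → Dᶜ.Nonempty → cutCap E C ≤ cutCap E D

/-- `Shave(X') = {v ∈ X' : d_{X'}(v) > (1 − 1/r²)·d(v)}`
(stated equivalently as `r²·d_{X'}(v) > (r²−1)·d(v)`). -/
def shave {V : Type*} [Fintype V] [DecidableEq V]
    (E : Finset (Finset V)) (r : ℕ) (X' : Finset V) : Finset V :=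
  X'.filter (fun v => (r ^ 2 - 1) * hypDeg E v < r ^ 2 * hypDegIn E X' v)


lemma pow_split (x k : ℕ) (hk : 1 ≤ k) : x ^ k = x * x ^ (k - 1) := by
  conv_lhs => rw [show k = 1 + (k - 1) by omega]
  rw [pow_add, pow_one]

lemma cutCap_compl {V : Type*} [Fintype V] [DecidableEq V]
    (E : Finset (Finset V)) (C : Finset V) : cutCap E Cᶜ = cutCap E C := by
  unfold cutCap
  rw [compl_compl]
  congr 1
  exact Finset.filter_congr fun e _ => and_comm

lemma isMinCut_compl {V : Type*} [Fintype V] [DecidableEq V]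
    (E : Finset (Finset V)) (C : Finset V) (h : IsMinCut E C) : IsMinCut E Cᶜ := by
  refine ⟨h.2.1, by rw [compl_compl]; exact h.1, fun D hD hDc => ?_⟩
  rw [cutCap_compl]
  exact h.2.2 D hD hDc

lemma double_count {V : Type*} [DecidableEq V]
    (A : Finset V) (B : Finset (Finset V)) :
    ∑ v ∈ A, (B.filter (fun e => v ∈ e)).card
      = ∑ e ∈ B, (A.filter (fun v => v ∈ e)).card := by
  simp only [Finset.card_filter]
  exact Finset.sum_comm


lemma poly_arith (x : ℤ) (h : 2 ≤ x) : x ^ 2 * (x + 1) ≤ 4 * x ^ 3 * (x - 1) := by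
  have h1 : 5 * x + 1 ≤ 4 * x ^ 2 := by nlinarith
  nlinarith [mul_le_mul_of_nonneg_left h1 (show (0 : ℤ) ≤ x ^ 2 by positivity)]

lemma final_arith (r b a S S' Tt n ρ m U Y lam : ℕ)
    (hr : 2 ≤ r) (hb1 : 1 ≤ b) (ha1 : 0 < a)
    (hF1 : S = S' + Tt) (hF2 : n ≤ Tt) (hF3 : S' ≤ U + Y)
    (hU : U ≤ r * m) (hY : Y + ρ ≤ r * ρ) (hRN : ρ ≤ n)
    (hF5 : r ^ 2 * S + a ≤ r ^ 2 * S' + S) (hF6 : a * lam ≤ S)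
    (hNA : m ≤ (r + 1) * (a * b)) (hF8 : r * (4 * r ^ 2 * b) ≤ lam) : False := by
  zify at hF1 hF2 hF3 hU hY hRN hF5 hF6 hNA hF8 hb1 ha1
  have c2 : (2 : ℤ) ≤ (r : ℤ) := by exact_mod_cast hr
  have hT0 : (0 : ℤ) ≤ (Tt : ℤ) := Int.natCast_nonneg _
  have hρ0 : (0 : ℤ) ≤ (ρ : ℤ) := Int.natCast_nonneg _
  have ha0 : (0 : ℤ) ≤ (a : ℤ) := Int.natCast_nonneg _
  have hb0 : (0 : ℤ) ≤ (b : ℤ) := Int.natCast_nonneg _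
  have Yb : (Y : ℤ) ≤ ((r : ℤ) - 1) * ρ := by
    have e : ((r : ℤ) - 1) * ρ = (r : ℤ) * ρ - ρ := by ring
    linarith
  have ρT : (ρ : ℤ) ≤ (Tt : ℤ) := le_trans hRN hF2
  have M1 : ((r : ℤ) - 1) * ρ ≤ ((r : ℤ) - 1) * Tt :=
    mul_le_mul_of_nonneg_left ρT (by linarith)
  have Z2 : (S' : ℤ) ≤ (r : ℤ) * m + ((r : ℤ) - 1) * Tt := by linarith
  have Z3 : (r : ℤ) ^ 2 * Tt + a ≤ (S' : ℤ) + Tt := by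
    have e1 : (r : ℤ) ^ 2 * S = (r : ℤ) ^ 2 * S' + (r : ℤ) ^ 2 * Tt := by rw [hF1]; ring
    linarith
  have Z4 : ((r : ℤ) ^ 2 - r) * Tt + a ≤ (r : ℤ) * m := by
    have e2 : ((r : ℤ) ^ 2) * Tt = ((r : ℤ) ^ 2 - r) * Tt + (((r : ℤ) - 1) * Tt + Tt) := by
      ring
    linarith
  have Z5 : ((r : ℤ) - 1) * S + a ≤ (r : ℤ) ^ 2 * m := by
    have M2 : ((r : ℤ) - 1) * S' ≤ ((r : ℤ) - 1) * ((r : ℤ) * m + ((r : ℤ) - 1) * Tt) :=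
      mul_le_mul_of_nonneg_left Z2 (by linarith)
    have e3 : ((r : ℤ) - 1) * S = ((r : ℤ) - 1) * S' + ((r : ℤ) - 1) * Tt := by rw [hF1]; ring
    have e4 : ((r : ℤ) - 1) * ((r : ℤ) * m + ((r : ℤ) - 1) * Tt) + ((r : ℤ) - 1) * Tt
        = (r : ℤ) * ((r : ℤ) - 1) * m + ((r : ℤ) ^ 2 - r) * Tt := by ring
    have e5 : (r : ℤ) * ((r : ℤ) - 1) * m + (r : ℤ) * m = (r : ℤ) ^ 2 * m := by ring
    linarith
  have W1 : ((r : ℤ) - 1) * ((a : ℤ) * lam) ≤ ((r : ℤ) - 1) * S :=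
    mul_le_mul_of_nonneg_left hF6 (by linarith)
  have W2 : (a : ℤ) * ((r : ℤ) * (4 * (r : ℤ) ^ 2 * b)) ≤ (a : ℤ) * lam :=
    mul_le_mul_of_nonneg_left hF8 ha0
  have W3 : ((r : ℤ) - 1) * ((a : ℤ) * ((r : ℤ) * (4 * (r : ℤ) ^ 2 * b)))
      ≤ ((r : ℤ) - 1) * ((a : ℤ) * lam) := mul_le_mul_of_nonneg_left W2 (by linarith)
  have Z6 := mul_le_mul_of_nonneg_left hNA (show (0 : ℤ) ≤ (r : ℤ) ^ 2 by positivity)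
  have hab1 : (1 : ℤ) ≤ (a : ℤ) * b := by
    have h := mul_le_mul (show (1 : ℤ) ≤ (a : ℤ) by linarith) hb1 (by norm_num) ha0
    simpa using h
  have Ppoly : (r : ℤ) ^ 2 * ((r : ℤ) + 1) ≤ 4 * (r : ℤ) ^ 3 * ((r : ℤ) - 1) :=
    poly_arith _ c2
  have Pmul : (r : ℤ) ^ 2 * ((r : ℤ) + 1) * ((a : ℤ) * b)
      ≤ 4 * (r : ℤ) ^ 3 * ((r : ℤ) - 1) * ((a : ℤ) * b) :=
    mul_le_mul_of_nonneg_right Ppoly (by positivity)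
  have e6 : ((r : ℤ) - 1) * ((a : ℤ) * ((r : ℤ) * (4 * (r : ℤ) ^ 2 * b)))
      = 4 * (r : ℤ) ^ 3 * ((r : ℤ) - 1) * ((a : ℤ) * b) := by ring
  have e7 : (r : ℤ) ^ 2 * (((r : ℤ) + 1) * ((a : ℤ) * b))
      = (r : ℤ) ^ 2 * ((r : ℤ) + 1) * ((a : ℤ) * b) := by ring
  linarith

lemma shave_key
    {V : Type*} [Fintype V] [DecidableEq V]
    (E : Finset (Finset V)) (r : ℕ) (hr : 2 ≤ r)
    (hrank : ∀ e ∈ E, e.card ≤ r)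
    (C : Finset V) (hC : IsMinCut E C)
    (hlam : r * (4 * r ^ 2) ^ r ≤ cutCap E C)
    (hCcard : 4 * r ^ 2 ≤ C.card)
    (X' : Finset V) (hA1 : 0 < (X' ∩ C).card) (hA3 : (X' ∩ C).card ≤ 3 * r ^ 2) :
    (shave E r X' ∩ C).card < (X' ∩ C).card := by
  by_contra hcon
  push_neg at hcon
  have hq : 0 < r ^ 2 := pow_pos (by omega) 2
  have hsub : shave E r X' ∩ C ⊆ X' ∩ C :=
    inter_subset_inter (filter_subset _ _) (Finset.Subset.refl C)
  have hEq : shave E r X' ∩ C = X' ∩ C := eq_of_subset_of_card_le hsub hcon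
  have hsh : ∀ v ∈ X' ∩ C, (r ^ 2 - 1) * hypDeg E v < r ^ 2 * hypDegIn E X' v := by
    intro v hv
    have hv' : v ∈ shave E r X' ∩ C := hEq ▸ hv
    exact (mem_filter.1 (mem_of_mem_inter_left hv')).2
  set A := X' ∩ C with hAdef
  set D := C \ X' with hDdef
  have hAC : A ⊆ C := inter_subset_right
  -- D card
  have hCA : C \ A = D := by
    ext x; simp only [hAdef, hDdef, mem_sdiff, mem_inter]; tauto
  have hDcard : D.card = C.card - A.card := by
    rw [← hCA, card_sdiff_of_subset hAC]
  have h34 : 3 * r ^ 2 < 4 * r ^ 2 := by nlinarith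
  have hDne : D.Nonempty := by
    rw [← card_pos, hDcard]
    omega
  have hDC : D ⊆ C := by rw [hDdef]; exact sdiff_subset
  have hDcne : Dᶜ.Nonempty := hC.2.1.mono (compl_subset_compl.2 hDC)
  -- the two edge sets
  set R := E.filter (fun e => (e ∩ C).Nonempty ∧ e ∩ C ⊆ X' ∧ (e ∩ Cᶜ).Nonempty) with hRdef
  set N := E.filter (fun e => e ⊆ C ∧ (e ∩ A).Nonempty ∧ (e ∩ D).Nonempty) with hNdef
  have hRsub : R ⊆ E.filter (fun e => (e ∩ C).Nonempty ∧ (e ∩ Cᶜ).Nonempty) := by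
    intro e he
    simp only [hRdef, mem_filter] at he ⊢
    tauto
  -- cut comparison
  have hRN : R.card ≤ N.card := by
    have hsubset :
        E.filter (fun e => (e ∩ D).Nonempty ∧ (e ∩ Dᶜ).Nonempty) ⊆
          (E.filter (fun e => (e ∩ C).Nonempty ∧ (e ∩ Cᶜ).Nonempty) \ R) ∪ N := by
      intro e he
      rw [mem_filter] at he
      obtain ⟨heE, h1, h2⟩ := he
      by_cases hcc : (e ∩ Cᶜ).Nonempty
      · refine mem_union_left _ (mem_sdiff.2 ⟨mem_filter.2 ⟨heE, ?_, hcc⟩, ?_⟩)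
        · obtain ⟨x, hx⟩ := h1
          rw [mem_inter] at hx
          exact ⟨x, mem_inter.2 ⟨hx.1, hDC hx.2⟩⟩
        · intro hmem
          rw [hRdef, mem_filter] at hmem
          obtain ⟨x, hx⟩ := h1
          rw [mem_inter] at hx
          have hx' : x ∈ X' := hmem.2.2.1 (mem_inter.2 ⟨hx.1, hDC hx.2⟩)
          rw [hDdef, mem_sdiff] at hx
          exact hx.2.2 hx'
      · refine mem_union_right _ ?_
        rw [hNdef, mem_filter]
        have heC : e ⊆ C := by
          intro x hx
          by_contra hxC
          exact hcc ⟨x, mem_inter.2 ⟨hx, mem_compl.2 hxC⟩⟩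
        refine ⟨heE, heC, ?_, h1⟩
        obtain ⟨y, hy⟩ := h2
        rw [mem_inter, mem_compl] at hy
        have hyC : y ∈ C := heC hy.1
        have hyX : y ∈ X' := by
          by_contra hyX
          exact hy.2 (by rw [hDdef, mem_sdiff]; exact ⟨hyC, hyX⟩)
        exact ⟨y, mem_inter.2 ⟨hy.1, mem_inter.2 ⟨hyX, hyC⟩⟩⟩
    have hdisj :
        Disjoint (E.filter (fun e => (e ∩ C).Nonempty ∧ (e ∩ Cᶜ).Nonempty) \ R) N := by
      rw [disjoint_left]
      intro e he heN
      rw [mem_sdiff, mem_filter] at he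
      rw [hNdef, mem_filter] at heN
      obtain ⟨x, hx⟩ := he.1.2.2
      rw [mem_inter, mem_compl] at hx
      exact hx.2 (heN.2.1 hx.1)
    have hle1 : cutCap E D ≤
        (E.filter (fun e => (e ∩ C).Nonempty ∧ (e ∩ Cᶜ).Nonempty) \ R).card + N.card :=
      le_trans (card_le_card hsubset) (card_union_le _ _)
    have hle2 : R.card ≤ cutCap E C := card_le_card hRsub
    have hle3 :
        (E.filter (fun e => (e ∩ C).Nonempty ∧ (e ∩ Cᶜ).Nonempty) \ R).card
          = cutCap E C - R.card := card_sdiff_of_subset hRsub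
    have hmc := hC.2.2 D hDne hDcne
    unfold cutCap at hle1 hle2 hle3 hmc
    omega

  -- split degrees
  have hsplit : ∀ v, hypDegIn E X' v
      + (E.filter (fun e => v ∈ e ∧ ¬ e ⊆ X')).card = hypDeg E v := by
    intro v
    unfold hypDeg hypDegIn
    have h1 : E.filter (fun e => v ∈ e ∧ e ⊆ X')
        = (E.filter (fun e => v ∈ e)).filter (fun e => e ⊆ X') := by
      rw [filter_filter]
    have h2 : E.filter (fun e => v ∈ e ∧ ¬ e ⊆ X')
        = (E.filter (fun e => v ∈ e)).filter (fun e => ¬ e ⊆ X') := by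
      rw [filter_filter]
    rw [h1, h2]
    exact card_filter_add_card_filter_not _
  have hF1 : ∑ v ∈ A, hypDeg E v = (∑ v ∈ A, hypDegIn E X' v)
      + ∑ v ∈ A, (E.filter (fun e => v ∈ e ∧ ¬ e ⊆ X')).card := by
    rw [← sum_add_distrib]
    exact (sum_congr rfl fun v _ => (hsplit v).symm)
  -- new edges are not inside X'
  have hF2 : N.card ≤ ∑ v ∈ A, (E.filter (fun e => v ∈ e ∧ ¬ e ⊆ X')).card := by
    have hNsub : N ⊆ A.biUnion (fun v => E.filter (fun e => v ∈ e ∧ ¬ e ⊆ X')) := by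
      intro e he
      rw [hNdef, mem_filter] at he
      obtain ⟨heE, heC, ⟨v, hv⟩, ⟨x, hx⟩⟩ := he
      rw [mem_inter] at hv hx
      rw [mem_biUnion]
      refine ⟨v, hv.2, mem_filter.2 ⟨heE, hv.1, fun hsubX => ?_⟩⟩
      have hx2 := hx.2
      rw [hDdef, mem_sdiff] at hx2
      exact hx2.2 (hsubX hx.1)
    exact le_trans (card_le_card hNsub) card_biUnion_le
  -- inside-X' edges at a vertex of A are either inside A or in R
  set EA := E.filter (fun e => e ⊆ A) with hEAdef
  have hF3v : ∀ v ∈ A, E.filter (fun e => v ∈ e ∧ e ⊆ X')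
      ⊆ EA.filter (fun e => v ∈ e) ∪ R.filter (fun e => v ∈ e) := by
    intro v hv e he
    rw [mem_filter] at he
    obtain ⟨heE, hve, heX⟩ := he
    by_cases heC : e ⊆ C
    · refine mem_union_left _ (mem_filter.2 ⟨?_, hve⟩)
      rw [hEAdef, mem_filter]
      exact ⟨heE, by rw [hAdef]; exact subset_inter heX heC⟩
    · refine mem_union_right _ (mem_filter.2 ⟨?_, hve⟩)
      rw [hRdef, mem_filter]
      refine ⟨heE, ⟨v, mem_inter.2 ⟨hve, hAC hv⟩⟩,
        fun x hx => heX (mem_inter.1 hx).1, ?_⟩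
      obtain ⟨x, hx, hxC⟩ : ∃ x ∈ e, x ∉ C := by
        by_contra h
        push_neg at h
        exact heC h
      exact ⟨x, mem_inter.2 ⟨hx, mem_compl.2 hxC⟩⟩
  have hF3 : ∑ v ∈ A, hypDegIn E X' v ≤
      (∑ v ∈ A, (EA.filter (fun e => v ∈ e)).card)
        + ∑ v ∈ A, (R.filter (fun e => v ∈ e)).card := by
    rw [← sum_add_distrib]
    refine sum_le_sum fun v hv => ?_
    calc hypDegIn E X' v ≤ (EA.filter (fun e => v ∈ e) ∪ R.filter (fun e => v ∈ e)).card :=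
          card_le_card (hF3v v hv)
      _ ≤ _ := card_union_le _ _
  have hU : ∑ v ∈ A, (EA.filter (fun e => v ∈ e)).card ≤ r * EA.card := by
    rw [double_count]
    calc ∑ e ∈ EA, (A.filter (fun v => v ∈ e)).card ≤ ∑ e ∈ EA, r := by
          refine sum_le_sum fun e he => ?_
          have h1 : A.filter (fun v => v ∈ e) ⊆ e := fun x hx => (mem_filter.1 hx).2
          have heE : e ∈ E := by
            rw [hEAdef] at he
            exact (mem_filter.1 he).1
          exact le_trans (card_le_card h1) (hrank e heE)
      _ = EA.card * r := by rw [sum_const, smul_eq_mul]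
      _ = r * EA.card := mul_comm _ _
  have hYb : (∑ v ∈ A, (R.filter (fun e => v ∈ e)).card) + R.card ≤ r * R.card := by
    rw [double_count]
    have h : ∀ e ∈ R, (A.filter (fun v => v ∈ e)).card + 1 ≤ r := by
      intro e he
      rw [hRdef, mem_filter] at he
      obtain ⟨heE, -, -, hcc⟩ := he
      have h1 : A.filter (fun v => v ∈ e) ⊆ e ∩ C := by
        intro x hx
        rw [mem_filter] at hx
        exact mem_inter.2 ⟨hx.2, hAC hx.1⟩
      have h2 : (e ∩ C).card + (e ∩ Cᶜ).card ≤ e.card := by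
        have hEq2 : e ∩ Cᶜ = e \ C := by
          ext x
          simp [mem_sdiff, mem_inter, mem_compl]
        rw [hEq2]
        exact le_of_eq (card_inter_add_card_sdiff e C)
      have h3 := hrank e heE
      have h4 : 1 ≤ (e ∩ Cᶜ).card := card_pos.2 hcc
      have h5 := card_le_card h1
      omega
    calc (∑ e ∈ R, (A.filter (fun v => v ∈ e)).card) + R.card
        = ∑ e ∈ R, ((A.filter (fun v => v ∈ e)).card + 1) := by
          rw [sum_add_distrib, sum_const, smul_eq_mul, mul_one]
      _ ≤ ∑ e ∈ R, r := sum_le_sum h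
      _ = R.card * r := by rw [sum_const, smul_eq_mul]
      _ = r * R.card := mul_comm _ _
  -- shave condition summed
  have hF5 : r ^ 2 * (∑ v ∈ A, hypDeg E v) + A.card
      ≤ r ^ 2 * (∑ v ∈ A, hypDegIn E X' v) + ∑ v ∈ A, hypDeg E v := by
    have hper : ∀ v ∈ A,
        r ^ 2 * hypDeg E v + 1 ≤ r ^ 2 * hypDegIn E X' v + hypDeg E v := by
      intro v hv
      have h1 : (r ^ 2 - 1) * hypDeg E v + 1 ≤ r ^ 2 * hypDegIn E X' v :=
        Nat.succ_le_of_lt (hsh v hv)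
      have h3 : (r ^ 2 - 1) + 1 = r ^ 2 := Nat.succ_pred_eq_of_pos hq
      calc r ^ 2 * hypDeg E v + 1
          = ((r ^ 2 - 1) + 1) * hypDeg E v + 1 := by rw [h3]
        _ = ((r ^ 2 - 1) * hypDeg E v + 1) + hypDeg E v := by ring
        _ ≤ r ^ 2 * hypDegIn E X' v + hypDeg E v := add_le_add_left h1 _
    calc r ^ 2 * (∑ v ∈ A, hypDeg E v) + A.card
        = ∑ v ∈ A, (r ^ 2 * hypDeg E v + 1) := by
          rw [sum_add_distrib, mul_sum, sum_const, smul_eq_mul, mul_one]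
      _ ≤ ∑ v ∈ A, (r ^ 2 * hypDegIn E X' v + hypDeg E v) := sum_le_sum hper
      _ = _ := by rw [sum_add_distrib, mul_sum]
  -- degree lower bound
  have hdv : ∀ v : V, cutCap E C ≤ hypDeg E v := by
    intro v
    have hVc := card_add_card_compl C
    have h4 : 4 ≤ C.card := le_trans (by nlinarith) hCcard
    have hvc : ({v}ᶜ : Finset V).Nonempty := by
      rw [← card_pos, card_compl, card_singleton]
      omega
    refine le_trans (hC.2.2 {v} ⟨v, mem_singleton_self v⟩ hvc) ?_
    unfold cutCap hypDeg
    refine card_le_card ?_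
    intro e he
    rw [mem_filter] at he ⊢
    obtain ⟨heE, ⟨x, hx⟩, -⟩ := he
    rw [mem_inter, mem_singleton] at hx
    exact ⟨heE, hx.2 ▸ hx.1⟩
  have hF6 : A.card * cutCap E C ≤ ∑ v ∈ A, hypDeg E v := by
    calc A.card * cutCap E C = ∑ _v ∈ A, cutCap E C := by rw [sum_const, smul_eq_mul]
      _ ≤ _ := sum_le_sum fun v _ => hdv v
  -- bound on edges inside A
  have hb1 : 1 ≤ (3 * r ^ 2) ^ (r - 1) := Nat.one_le_pow _ _ (by nlinarith)
  have hNA : EA.card ≤ (r + 1) * (A.card * (3 * r ^ 2) ^ (r - 1)) := by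
    have hsub2 : EA ⊆ (Finset.range (r + 1)).biUnion (fun i => A.powersetCard i) := by
      intro e he
      rw [hEAdef, mem_filter] at he
      rw [mem_biUnion]
      exact ⟨e.card, mem_range.2 (Nat.lt_succ_of_le (hrank e he.1)),
        mem_powersetCard.2 ⟨he.2, rfl⟩⟩
    have h1 : EA.card ≤ ∑ i ∈ Finset.range (r + 1), (A.card).choose i := by
      refine le_trans (card_le_card hsub2) (le_trans card_biUnion_le (le_of_eq ?_))
      exact sum_congr rfl fun i _ => card_powersetCard i A
    have h2 : ∀ i ∈ Finset.range (r + 1),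
        (A.card).choose i ≤ A.card * (3 * r ^ 2) ^ (r - 1) := by
      intro i hi
      refine le_trans (Nat.choose_le_pow A.card i) ?_
      refine le_trans (Nat.pow_le_pow_right hA1 (Nat.lt_succ_iff.1 (mem_range.1 hi))) ?_
      have he : A.card ^ r = A.card * A.card ^ (r - 1) := by
        conv_lhs => rw [show r = 1 + (r - 1) by omega, pow_add, pow_one]
      rw [he]
      exact Nat.mul_le_mul_left _ (Nat.pow_le_pow_left hA3 _)
    calc EA.card ≤ ∑ i ∈ Finset.range (r + 1), (A.card).choose i := h1
      _ ≤ ∑ _i ∈ Finset.range (r + 1), A.card * (3 * r ^ 2) ^ (r - 1) := sum_le_sum h2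
      _ = (r + 1) * (A.card * (3 * r ^ 2) ^ (r - 1)) := by
          rw [sum_const, card_range, smul_eq_mul]
  -- min-cut size lower bound in convenient form
  have hF8 : r * (4 * r ^ 2 * (3 * r ^ 2) ^ (r - 1)) ≤ cutCap E C := by
    refine le_trans ?_ hlam
    refine Nat.mul_le_mul_left r ?_
    calc 4 * r ^ 2 * (3 * r ^ 2) ^ (r - 1)
        ≤ 4 * r ^ 2 * (4 * r ^ 2) ^ (r - 1) :=
          Nat.mul_le_mul_left _ (Nat.pow_le_pow_left (le_of_lt h34) _)
      _ = (4 * r ^ 2) ^ r := by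
          rw [pow_split (4 * r ^ 2) r (by omega)]
  exact final_arith r ((3 * r ^ 2) ^ (r - 1)) A.card (∑ v ∈ A, hypDeg E v)
    (∑ v ∈ A, hypDegIn E X' v)
    (∑ v ∈ A, (E.filter (fun e => v ∈ e ∧ ¬ e ⊆ X')).card)
    N.card R.card EA.card
    (∑ v ∈ A, (EA.filter (fun e => v ∈ e)).card)
    (∑ v ∈ A, (R.filter (fun e => v ∈ e)).card)
    (cutCap E C) hr hb1 hA1 hF1 hF2 hF3 hU hYb hRN hF5 hF6 hNA hF8



/-- Suppose the `r`-rank hypergraph has min-cut capacity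
`λ ≥ r(4r²)^r`, `(C, V∖C)` is a min-cut with `min{|C|,|V∖C|} ≥ 4r²`, and
`X' ⊆ V` satisfies `0 < min{|X'∩C|, |X'∩(V∖C)|} ≤ 3r²`. Then for
`X'' = Shave(X')` we have
`min{|X''∩C|, |X''∩(V∖C)|} ≤ min{|X'∩C|, |X'∩(V∖C)|} − 1`. -/
theorem shave_bound
    {V : Type*} [Fintype V] [DecidableEq V]
    (E : Finset (Finset V)) (r : ℕ) (hr : 2 ≤ r)
    (hrank : ∀ e ∈ E, e.card ≤ r)
    (C : Finset V) (hC : IsMinCut E C)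
    (hlam : r * (4 * r ^ 2) ^ r ≤ cutCap E C)
    (hside : 4 * r ^ 2 ≤ min C.card Cᶜ.card)
    (X' : Finset V)
    (hpos : 0 < min (X' ∩ C).card (X' ∩ Cᶜ).card)
    (hle : min (X' ∩ C).card (X' ∩ Cᶜ).card ≤ 3 * r ^ 2) :
    min ((shave E r X') ∩ C).card ((shave E r X') ∩ Cᶜ).card ≤
      min (X' ∩ C).card (X' ∩ Cᶜ).card - 1 := by
  rcases le_or_gt (X' ∩ C).card (X' ∩ Cᶜ).card with h | h
  · have hm : min (X' ∩ C).card (X' ∩ Cᶜ).card = (X' ∩ C).card := min_eq_left h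
    rw [hm] at hpos hle
    have hk := shave_key E r hr hrank C hC hlam
      (le_trans hside (min_le_left _ _)) X' hpos hle
    have h2 := min_le_left ((shave E r X') ∩ C).card ((shave E r X') ∩ Cᶜ).card
    omega
  · have hm : min (X' ∩ C).card (X' ∩ Cᶜ).card = (X' ∩ Cᶜ).card := min_eq_right h.le
    rw [hm] at hpos hle
    have hC' : IsMinCut E Cᶜ := isMinCut_compl E C hC
    have hlam' : r * (4 * r ^ 2) ^ r ≤ cutCap E Cᶜ := by
      rw [cutCap_compl]
      exact hlam
    have hk := shave_key E r hr hrank Cᶜ hC' hlam'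
      (le_trans hside (min_le_right _ _)) X' hpos hle
    have h2 := min_le_right ((shave E r X') ∩ C).card ((shave E r X') ∩ Cᶜ).card
    omega
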